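/- Let S = ℤ/2[t₁, t₂], b₁ = t₁² + t₁t₂ + t₂², b₂ = t₂³. Then the quotient S/(b₁², b₂², b₁b₂) is a free module over ℤ/2 of dimension 18, with basis given by the images of the products m·e where m ranges over the 6 monomials t₁^a t₂^b (0 ≤ a ≤ 1, 0 ≤ b ≤ 2) and e ∈ {1, b₁, b₂}. -/

import Mathlib

open MvPolynomial

/-- `b₁ = t₁² + t₁t₂ + t₂²` in `S = ℤ/2[t₁, t₂]` (with `t₁ = X 0`, `t₂ = X 1`). -/
noncomputable abbrev b1 : MvPolynomial (Fin 2) (ZMod 2) :=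
  X 0 ^ 2 + X 0 * X 1 + X 1 ^ 2

/-- `b₂ = t₂³`. -/
noncomputable abbrev b2 : MvPolynomial (Fin 2) (ZMod 2) :=
  X 1 ^ 3

/-- `S/(b₁², b₂², b₁b₂)`, modelling `CH*(X)/2` for the non-split `G₂` flag variety. -/
noncomputable abbrev ChowG2 : Type :=
  MvPolynomial (Fin 2) (ZMod 2) ⧸
    Ideal.span ({b1 ^ 2, b2 ^ 2, b1 * b2} : Set (MvPolynomial (Fin 2) (ZMod 2)))

noncomputable abbrev SG2 := MvPolynomial (Fin 2) (ZMod 2)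

noncomputable abbrev IdlG2 : Ideal SG2 :=
  Ideal.span ({b1 ^ 2, b2 ^ 2, b1 * b2} : Set (MvPolynomial (Fin 2) (ZMod 2)))

abbrev ιG2 := Fin 2 × Fin 3 × Fin 3

def Ltbl (i j k : Nat) : List (Nat × Nat) :=
  match i, j, k with
  | 0,0,0 => [(0, 0)]
  | 0,0,1 => [(2, 0)]
  | 0,0,2 => [(0, 3), (2, 1), (3, 0)]
  | 0,1,0 => [(0, 1)]
  | 0,1,1 => [(2, 1), (3, 0)]
  | 0,1,2 => [(0, 4), (2, 2), (3, 1)]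
  | 0,2,0 => [(0, 2), (2, 0)]
  | 0,2,1 => [(2, 2), (3, 1), (4, 0)]
  | 0,2,2 => [(0, 5), (2, 3), (3, 2), (5, 0)]
  | 1,0,0 => [(1, 0)]
  | 1,0,1 => [(3, 0)]
  | 1,0,2 => [(1, 3), (2, 2), (4, 0)]
  | 1,1,0 => [(1, 1), (2, 0)]
  | 1,1,1 => [(3, 1)]
  | 1,1,2 => [(1, 4), (2, 3), (4, 1), (5, 0)]
  | 1,2,0 => [(1, 2), (2, 1)]
  | 1,2,1 => [(3, 2), (5, 0)]
  | 1,2,2 => [(1, 5), (2, 4), (4, 2), (5, 1)]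
  | _,_,_ => []

def cc (q : ιG2) (a b : ℕ) : ZMod 2 :=
  if a + b ≤ 6 then (if (a,b) ∈ Ltbl q.1.val q.2.1.val q.2.2.val then 1 else 0) else 0

lemma cc_zero (q : ιG2) (a b : ℕ) (h : 6 < a + b) : cc q a b = 0 := by
  rw [cc, if_neg (by omega)]

noncomputable def lam (q : ιG2) : SG2 →ₗ[ZMod 2] ZMod 2 :=
  (basisMonomials (Fin 2) (ZMod 2)).constr ℕ (fun ν => cc q (ν 0) (ν 1))

lemma mon_eq (ν : Fin 2 →₀ ℕ) : (monomial ν (1:ZMod 2)) = X 0 ^ (ν 0) * X 1 ^ (ν 1) := by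
  have h : Finsupp.single (0:Fin 2) (ν 0) + Finsupp.single 1 (ν 1) = ν := by
    ext i; fin_cases i <;> simp [Finsupp.single_apply]
  rw [X_pow_eq_monomial, X_pow_eq_monomial, monomial_mul, one_mul, h]

lemma lam_mon (q : ιG2) (a b : ℕ) : lam q (X 0 ^ a * X 1 ^ b) = cc q a b := by
  have h : (X 0 ^ a * X 1 ^ b : SG2) = basisMonomials (Fin 2) (ZMod 2) (Finsupp.single 0 a + Finsupp.single 1 b) := by
    rw [coe_basisMonomials, X_pow_eq_monomial, X_pow_eq_monomial, monomial_mul, one_mul]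
  rw [h, lam, Module.Basis.constr_basis]
  simp [Finsupp.single_apply]

lemma two_zero : (2 : SG2) = 0 := by
  exact_mod_cast CharP.cast_eq_zero SG2 2

lemma lam_mul_zero (q : ιG2) (g : SG2) (h : ∀ a b : ℕ, lam q (X 0 ^ a * X 1 ^ b * g) = 0)
    (f : SG2) : lam q (f * g) = 0 := by
  have key : (lam q).comp (LinearMap.mulRight (ZMod 2) g) = 0 := by
    apply Module.Basis.ext (basisMonomials (Fin 2) (ZMod 2))
    intro ν
    have hm : (basisMonomials (Fin 2) (ZMod 2)) ν = X 0 ^ (ν 0) * X 1 ^ (ν 1) := by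
      rw [coe_basisMonomials]; exact mon_eq ν
    rw [hm]
    simpa using h (ν 0) (ν 1)
  simpa using LinearMap.congr_fun key f

lemma lam_g1 (q : ιG2) (a b : ℕ) : lam q (X 0 ^ a * X 1 ^ b * (b1^2)) = 0 := by
  have e : (X 0 ^ a * X 1 ^ b * (b1^2) : SG2) = X 0^(a+4)*X 1^b + X 0^(a+2)*X 1^(b+2) + X 0^a*X 1^(b+4) := by
    linear_combination (X 0^(a+3)*X 1^(b+1) + X 0^(a+2)*X 1^(b+2) + X 0^(a+1)*X 1^(b+3)) * two_zero
  rw [e, map_add, map_add, lam_mon, lam_mon, lam_mon]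
  by_cases h : a + b ≤ 2
  · have ha : a ≤ 2 := by omega
    have hb : b ≤ 2 := by omega
    clear h
    interval_cases a <;> interval_cases b <;> revert q <;> decide
  · rw [cc_zero _ _ _ (by omega), cc_zero _ _ _ (by omega), cc_zero _ _ _ (by omega)]; ring

lemma lam_g2 (q : ιG2) (a b : ℕ) : lam q (X 0 ^ a * X 1 ^ b * (b2^2)) = 0 := by
  have e : (X 0 ^ a * X 1 ^ b * (b2^2) : SG2) = X 0^a*X 1^(b+6) := by ring
  rw [e, lam_mon]
  rcases Nat.eq_zero_or_pos (a + b) with h | h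
  · obtain ⟨rfl, rfl⟩ : a = 0 ∧ b = 0 := by omega
    revert q; decide
  · exact cc_zero _ _ _ (by omega)

lemma lam_g3 (q : ιG2) (a b : ℕ) : lam q (X 0 ^ a * X 1 ^ b * (b1*b2)) = 0 := by
  have e : (X 0 ^ a * X 1 ^ b * (b1*b2) : SG2) = X 0^(a+2)*X 1^(b+3) + X 0^(a+1)*X 1^(b+4) + X 0^a*X 1^(b+5) := by ring
  rw [e, map_add, map_add, lam_mon, lam_mon, lam_mon]
  by_cases h : a + b ≤ 1
  · have ha : a ≤ 1 := by omega
    have hb : b ≤ 1 := by omega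
    clear h
    interval_cases a <;> interval_cases b <;> revert q <;> decide
  · rw [cc_zero _ _ _ (by omega), cc_zero _ _ _ (by omega), cc_zero _ _ _ (by omega)]; ring

lemma lam_ideal (q : ιG2) (f : SG2) (hf : f ∈ IdlG2) : lam q f = 0 := by
  rw [show IdlG2 = Ideal.span (insert (b1^2) (insert (b2^2) {b1*b2})) from rfl,
    Ideal.span, Submodule.mem_span_insert] at hf
  obtain ⟨x, w, hw, rfl⟩ := hf
  rw [Submodule.mem_span_insert] at hw
  obtain ⟨y, w2, hw2, rfl⟩ := hw
  rw [Submodule.mem_span_singleton] at hw2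
  obtain ⟨z, rfl⟩ := hw2
  simp only [smul_eq_mul]
  rw [map_add, map_add]
  rw [lam_mul_zero q _ (fun a b => lam_g1 q a b) x,
      lam_mul_zero q _ (fun a b => lam_g2 q a b) y,
      lam_mul_zero q _ (fun a b => lam_g3 q a b) z]
  ring

noncomputable def PG2 (q : ιG2) : SG2 :=
  X 0 ^ (q.1 : ℕ) * X 1 ^ (q.2.1 : ℕ) * ![1, b1, b2] q.2.2

noncomputable def vG2 (q : ιG2) : ChowG2 :=
  (Ideal.Quotient.mkₐ (ZMod 2) IdlG2).toLinearMap (PG2 q)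

lemma lamP000 (q : ιG2) : lam q (PG2 (0,0,0)) = if q = (0,0,0) then 1 else 0 := by
  have e : PG2 (0,0,0) = X 0^0*X 1^0 := by
    rw [show PG2 (0,0,0) = X 0^0*X 1^0*1 from rfl]; ring
  rw [e, lam_mon]
  revert q; decide

lemma lamP001 (q : ιG2) : lam q (PG2 (0,0,1)) = if q = (0,0,1) then 1 else 0 := by
  have e : PG2 (0,0,1) = X 0^0*X 1^2 + X 0^1*X 1^1 + X 0^2*X 1^0 := by
    rw [show PG2 (0,0,1) = X 0^0*X 1^0*b1 from rfl]; ring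
  rw [e, map_add, map_add, lam_mon, lam_mon, lam_mon]
  revert q; decide

lemma lamP002 (q : ιG2) : lam q (PG2 (0,0,2)) = if q = (0,0,2) then 1 else 0 := by
  have e : PG2 (0,0,2) = X 0^0*X 1^3 := by
    rw [show PG2 (0,0,2) = X 0^0*X 1^0*b2 from rfl]; ring
  rw [e, lam_mon]
  revert q; decide

lemma lamP010 (q : ιG2) : lam q (PG2 (0,1,0)) = if q = (0,1,0) then 1 else 0 := by
  have e : PG2 (0,1,0) = X 0^0*X 1^1 := by
    rw [show PG2 (0,1,0) = X 0^0*X 1^1*1 from rfl]; ring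
  rw [e, lam_mon]
  revert q; decide

lemma lamP011 (q : ιG2) : lam q (PG2 (0,1,1)) = if q = (0,1,1) then 1 else 0 := by
  have e : PG2 (0,1,1) = X 0^0*X 1^3 + X 0^1*X 1^2 + X 0^2*X 1^1 := by
    rw [show PG2 (0,1,1) = X 0^0*X 1^1*b1 from rfl]; ring
  rw [e, map_add, map_add, lam_mon, lam_mon, lam_mon]
  revert q; decide

lemma lamP012 (q : ιG2) : lam q (PG2 (0,1,2)) = if q = (0,1,2) then 1 else 0 := by
  have e : PG2 (0,1,2) = X 0^0*X 1^4 := by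
    rw [show PG2 (0,1,2) = X 0^0*X 1^1*b2 from rfl]; ring
  rw [e, lam_mon]
  revert q; decide

lemma lamP020 (q : ιG2) : lam q (PG2 (0,2,0)) = if q = (0,2,0) then 1 else 0 := by
  have e : PG2 (0,2,0) = X 0^0*X 1^2 := by
    rw [show PG2 (0,2,0) = X 0^0*X 1^2*1 from rfl]; ring
  rw [e, lam_mon]
  revert q; decide

lemma lamP021 (q : ιG2) : lam q (PG2 (0,2,1)) = if q = (0,2,1) then 1 else 0 := by
  have e : PG2 (0,2,1) = X 0^0*X 1^4 + X 0^1*X 1^3 + X 0^2*X 1^2 := by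
    rw [show PG2 (0,2,1) = X 0^0*X 1^2*b1 from rfl]; ring
  rw [e, map_add, map_add, lam_mon, lam_mon, lam_mon]
  revert q; decide

lemma lamP022 (q : ιG2) : lam q (PG2 (0,2,2)) = if q = (0,2,2) then 1 else 0 := by
  have e : PG2 (0,2,2) = X 0^0*X 1^5 := by
    rw [show PG2 (0,2,2) = X 0^0*X 1^2*b2 from rfl]; ring
  rw [e, lam_mon]
  revert q; decide

lemma lamP100 (q : ιG2) : lam q (PG2 (1,0,0)) = if q = (1,0,0) then 1 else 0 := by
  have e : PG2 (1,0,0) = X 0^1*X 1^0 := by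
    rw [show PG2 (1,0,0) = X 0^1*X 1^0*1 from rfl]; ring
  rw [e, lam_mon]
  revert q; decide

lemma lamP101 (q : ιG2) : lam q (PG2 (1,0,1)) = if q = (1,0,1) then 1 else 0 := by
  have e : PG2 (1,0,1) = X 0^1*X 1^2 + X 0^2*X 1^1 + X 0^3*X 1^0 := by
    rw [show PG2 (1,0,1) = X 0^1*X 1^0*b1 from rfl]; ring
  rw [e, map_add, map_add, lam_mon, lam_mon, lam_mon]
  revert q; decide

lemma lamP102 (q : ιG2) : lam q (PG2 (1,0,2)) = if q = (1,0,2) then 1 else 0 := by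
  have e : PG2 (1,0,2) = X 0^1*X 1^3 := by
    rw [show PG2 (1,0,2) = X 0^1*X 1^0*b2 from rfl]; ring
  rw [e, lam_mon]
  revert q; decide

lemma lamP110 (q : ιG2) : lam q (PG2 (1,1,0)) = if q = (1,1,0) then 1 else 0 := by
  have e : PG2 (1,1,0) = X 0^1*X 1^1 := by
    rw [show PG2 (1,1,0) = X 0^1*X 1^1*1 from rfl]; ring
  rw [e, lam_mon]
  revert q; decide

lemma lamP111 (q : ιG2) : lam q (PG2 (1,1,1)) = if q = (1,1,1) then 1 else 0 := by
  have e : PG2 (1,1,1) = X 0^1*X 1^3 + X 0^2*X 1^2 + X 0^3*X 1^1 := by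
    rw [show PG2 (1,1,1) = X 0^1*X 1^1*b1 from rfl]; ring
  rw [e, map_add, map_add, lam_mon, lam_mon, lam_mon]
  revert q; decide

lemma lamP112 (q : ιG2) : lam q (PG2 (1,1,2)) = if q = (1,1,2) then 1 else 0 := by
  have e : PG2 (1,1,2) = X 0^1*X 1^4 := by
    rw [show PG2 (1,1,2) = X 0^1*X 1^1*b2 from rfl]; ring
  rw [e, lam_mon]
  revert q; decide

lemma lamP120 (q : ιG2) : lam q (PG2 (1,2,0)) = if q = (1,2,0) then 1 else 0 := by
  have e : PG2 (1,2,0) = X 0^1*X 1^2 := by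
    rw [show PG2 (1,2,0) = X 0^1*X 1^2*1 from rfl]; ring
  rw [e, lam_mon]
  revert q; decide

lemma lamP121 (q : ιG2) : lam q (PG2 (1,2,1)) = if q = (1,2,1) then 1 else 0 := by
  have e : PG2 (1,2,1) = X 0^1*X 1^4 + X 0^2*X 1^3 + X 0^3*X 1^2 := by
    rw [show PG2 (1,2,1) = X 0^1*X 1^2*b1 from rfl]; ring
  rw [e, map_add, map_add, lam_mon, lam_mon, lam_mon]
  revert q; decide

lemma lamP122 (q : ιG2) : lam q (PG2 (1,2,2)) = if q = (1,2,2) then 1 else 0 := by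
  have e : PG2 (1,2,2) = X 0^1*X 1^5 := by
    rw [show PG2 (1,2,2) = X 0^1*X 1^2*b2 from rfl]; ring
  rw [e, lam_mon]
  revert q; decide

lemma lam_P (q r : ιG2) : lam q (PG2 r) = if q = r then 1 else 0 := by
  obtain ⟨a, b, k⟩ := r
  fin_cases a <;> fin_cases b <;> fin_cases k
  exacts [lamP000 q, lamP001 q, lamP002 q, lamP010 q, lamP011 q, lamP012 q, lamP020 q, lamP021 q, lamP022 q, lamP100 q, lamP101 q, lamP102 q, lamP110 q, lamP111 q, lamP112 q, lamP120 q, lamP121 q, lamP122 q]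

lemma hi_mem : ∀ i : ℕ, ∀ j : ℕ, 7 ≤ i + j → (X 0 : SG2) ^ i * X 1 ^ j ∈ IdlG2 := by
  intro i
  induction i using Nat.strong_induction_on with
  | _ i ih =>
    intro j hj
    rcases Nat.lt_or_ge i 2 with h1 | h1
    · obtain ⟨j', rfl⟩ : ∃ j', j = j' + 6 := ⟨j - 6, by omega⟩
      have e : (X 0 : SG2) ^ i * X 1 ^ (j' + 6) = (X 0 ^ i * X 1 ^ j') * b2 ^ 2 := by ring
      rw [e]
      exact Ideal.mul_mem_left _ _ (Ideal.subset_span (Set.mem_insert_of_mem _ (Set.mem_insert _ _)))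
    · rcases Nat.lt_or_ge i 4 with h2 | h2
      · obtain ⟨i', rfl⟩ : ∃ i', i = i' + 2 := ⟨i - 2, by omega⟩
        obtain ⟨j', rfl⟩ : ∃ j', j = j' + 3 := ⟨j - 3, by omega⟩
        have e : (X 0 : SG2) ^ (i' + 2) * X 1 ^ (j' + 3) =
            (X 0 ^ i' * X 1 ^ j') * (b1 * b2) + (X 0 ^ (i'+1) * X 1 ^ (j'+4) + X 0 ^ i' * X 1 ^ (j'+5)) := by
          linear_combination (-(X 0 ^ (i'+1) * X 1 ^ (j'+4)) - X 0 ^ i' * X 1 ^ (j'+5)) * two_zero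
        rw [e]
        refine add_mem (Ideal.mul_mem_left _ _ (Ideal.subset_span (Set.mem_insert_of_mem _ (Set.mem_insert_of_mem _ rfl)))) (add_mem ?_ ?_)
        · exact ih (i'+1) (by omega) (j'+4) (by omega)
        · exact ih i' (by omega) (j'+5) (by omega)
      · obtain ⟨i', rfl⟩ : ∃ i', i = i' + 4 := ⟨i - 4, by omega⟩
        have e : (X 0 : SG2) ^ (i' + 4) * X 1 ^ j =
            (X 0 ^ i' * X 1 ^ j) * (b1 ^ 2) + (X 0 ^ (i'+2) * X 1 ^ (j+2) + X 0 ^ i' * X 1 ^ (j+4)) := by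
          linear_combination (-(X 0 ^ (i'+3) * X 1 ^ (j+1)) - (2)*X 0 ^ (i'+2) * X 1 ^ (j+2) - X 0 ^ (i'+1) * X 1 ^ (j+3) - X 0 ^ i' * X 1 ^ (j+4)) * two_zero
        rw [e]
        refine add_mem (Ideal.mul_mem_left _ _ (Ideal.subset_span (Set.mem_insert _ _))) (add_mem ?_ ?_)
        · exact ih (i'+2) (by omega) (j+2) (by omega)
        · exact ih i' (by omega) (j+4) (by omega)

noncomputable def WG2 : Submodule (ZMod 2) ChowG2 := Submodule.span (ZMod 2) (Set.range vG2)

lemma hvW (r : ιG2) : vG2 r ∈ WG2 := Submodule.subset_span ⟨r, rfl⟩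

lemma sp00 : (Ideal.Quotient.mkₐ (ZMod 2) IdlG2).toLinearMap (X 0^0*X 1^0 : SG2) ∈ WG2 := by
  have e : (X 0^0*X 1^0 : SG2) = PG2 (0,0,0) := by
    rw [show PG2 (0,0,0) = X 0^0*X 1^0*1 from rfl]
    ring
  rw [e]
  exact hvW (0,0,0)

lemma sp01 : (Ideal.Quotient.mkₐ (ZMod 2) IdlG2).toLinearMap (X 0^0*X 1^1 : SG2) ∈ WG2 := by
  have e : (X 0^0*X 1^1 : SG2) = PG2 (0,1,0) := by
    rw [show PG2 (0,1,0) = X 0^0*X 1^1*1 from rfl]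
    ring
  rw [e]
  exact hvW (0,1,0)

lemma sp02 : (Ideal.Quotient.mkₐ (ZMod 2) IdlG2).toLinearMap (X 0^0*X 1^2 : SG2) ∈ WG2 := by
  have e : (X 0^0*X 1^2 : SG2) = PG2 (0,2,0) := by
    rw [show PG2 (0,2,0) = X 0^0*X 1^2*1 from rfl]
    ring
  rw [e]
  exact hvW (0,2,0)

lemma sp03 : (Ideal.Quotient.mkₐ (ZMod 2) IdlG2).toLinearMap (X 0^0*X 1^3 : SG2) ∈ WG2 := by
  have e : (X 0^0*X 1^3 : SG2) = PG2 (0,0,2) := by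
    rw [show PG2 (0,0,2) = X 0^0*X 1^0*b2 from rfl]
    ring
  rw [e]
  exact hvW (0,0,2)

lemma sp04 : (Ideal.Quotient.mkₐ (ZMod 2) IdlG2).toLinearMap (X 0^0*X 1^4 : SG2) ∈ WG2 := by
  have e : (X 0^0*X 1^4 : SG2) = PG2 (0,1,2) := by
    rw [show PG2 (0,1,2) = X 0^0*X 1^1*b2 from rfl]
    ring
  rw [e]
  exact hvW (0,1,2)

lemma sp05 : (Ideal.Quotient.mkₐ (ZMod 2) IdlG2).toLinearMap (X 0^0*X 1^5 : SG2) ∈ WG2 := by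
  have e : (X 0^0*X 1^5 : SG2) = PG2 (0,2,2) := by
    rw [show PG2 (0,2,2) = X 0^0*X 1^2*b2 from rfl]
    ring
  rw [e]
  exact hvW (0,2,2)

lemma sp06 : (Ideal.Quotient.mkₐ (ZMod 2) IdlG2).toLinearMap (X 0^0*X 1^6 : SG2) ∈ WG2 := by
  have e : (X 0^0*X 1^6 : SG2) = (X 0^0*X 1^0*(b2^2)) := by
    ring
  rw [e]
  have hmem : (X 0^0*X 1^0*(b2^2) : SG2) ∈ IdlG2 := Ideal.mul_mem_left _ (X 0^0*X 1^0) (Ideal.subset_span (Set.mem_insert_of_mem _ (Set.mem_insert _ _)))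
  have hz : (Ideal.Quotient.mkₐ (ZMod 2) IdlG2).toLinearMap (X 0^0*X 1^0*(b2^2) : SG2) = 0 := Ideal.Quotient.eq_zero_iff_mem.2 hmem
  rw [hz]
  exact Submodule.zero_mem _

lemma sp10 : (Ideal.Quotient.mkₐ (ZMod 2) IdlG2).toLinearMap (X 0^1*X 1^0 : SG2) ∈ WG2 := by
  have e : (X 0^1*X 1^0 : SG2) = PG2 (1,0,0) := by
    rw [show PG2 (1,0,0) = X 0^1*X 1^0*1 from rfl]
    ring
  rw [e]
  exact hvW (1,0,0)

lemma sp11 : (Ideal.Quotient.mkₐ (ZMod 2) IdlG2).toLinearMap (X 0^1*X 1^1 : SG2) ∈ WG2 := by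
  have e : (X 0^1*X 1^1 : SG2) = PG2 (1,1,0) := by
    rw [show PG2 (1,1,0) = X 0^1*X 1^1*1 from rfl]
    ring
  rw [e]
  exact hvW (1,1,0)

lemma sp12 : (Ideal.Quotient.mkₐ (ZMod 2) IdlG2).toLinearMap (X 0^1*X 1^2 : SG2) ∈ WG2 := by
  have e : (X 0^1*X 1^2 : SG2) = PG2 (1,2,0) := by
    rw [show PG2 (1,2,0) = X 0^1*X 1^2*1 from rfl]
    ring
  rw [e]
  exact hvW (1,2,0)

lemma sp13 : (Ideal.Quotient.mkₐ (ZMod 2) IdlG2).toLinearMap (X 0^1*X 1^3 : SG2) ∈ WG2 := by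
  have e : (X 0^1*X 1^3 : SG2) = PG2 (1,0,2) := by
    rw [show PG2 (1,0,2) = X 0^1*X 1^0*b2 from rfl]
    ring
  rw [e]
  exact hvW (1,0,2)

lemma sp14 : (Ideal.Quotient.mkₐ (ZMod 2) IdlG2).toLinearMap (X 0^1*X 1^4 : SG2) ∈ WG2 := by
  have e : (X 0^1*X 1^4 : SG2) = PG2 (1,1,2) := by
    rw [show PG2 (1,1,2) = X 0^1*X 1^1*b2 from rfl]
    ring
  rw [e]
  exact hvW (1,1,2)

lemma sp15 : (Ideal.Quotient.mkₐ (ZMod 2) IdlG2).toLinearMap (X 0^1*X 1^5 : SG2) ∈ WG2 := by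
  have e : (X 0^1*X 1^5 : SG2) = PG2 (1,2,2) := by
    rw [show PG2 (1,2,2) = X 0^1*X 1^2*b2 from rfl]
    ring
  rw [e]
  exact hvW (1,2,2)

lemma sp20 : (Ideal.Quotient.mkₐ (ZMod 2) IdlG2).toLinearMap (X 0^2*X 1^0 : SG2) ∈ WG2 := by
  have e : (X 0^2*X 1^0 : SG2) = PG2 (0,0,1) + PG2 (0,2,0) + PG2 (1,1,0) := by
    rw [show PG2 (0,0,1) = X 0^0*X 1^0*b1 from rfl]; rw [show PG2 (0,2,0) = X 0^0*X 1^2*1 from rfl]; rw [show PG2 (1,1,0) = X 0^1*X 1^1*1 from rfl]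
    linear_combination (-X 0^0*X 1^2 - X 0^1*X 1^1) * two_zero
  rw [e]
  rw [map_add, map_add]
  exact Submodule.add_mem _ (Submodule.add_mem _ (hvW (0,0,1)) (hvW (0,2,0))) (hvW (1,1,0))

lemma sp21 : (Ideal.Quotient.mkₐ (ZMod 2) IdlG2).toLinearMap (X 0^2*X 1^1 : SG2) ∈ WG2 := by
  have e : (X 0^2*X 1^1 : SG2) = PG2 (0,0,2) + PG2 (0,1,1) + PG2 (1,2,0) := by
    rw [show PG2 (0,0,2) = X 0^0*X 1^0*b2 from rfl]; rw [show PG2 (0,1,1) = X 0^0*X 1^1*b1 from rfl]; rw [show PG2 (1,2,0) = X 0^1*X 1^2*1 from rfl]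
    linear_combination (-X 0^0*X 1^3 - X 0^1*X 1^2) * two_zero
  rw [e]
  rw [map_add, map_add]
  exact Submodule.add_mem _ (Submodule.add_mem _ (hvW (0,0,2)) (hvW (0,1,1))) (hvW (1,2,0))

lemma sp22 : (Ideal.Quotient.mkₐ (ZMod 2) IdlG2).toLinearMap (X 0^2*X 1^2 : SG2) ∈ WG2 := by
  have e : (X 0^2*X 1^2 : SG2) = PG2 (0,1,2) + PG2 (0,2,1) + PG2 (1,0,2) := by
    rw [show PG2 (0,1,2) = X 0^0*X 1^1*b2 from rfl]; rw [show PG2 (0,2,1) = X 0^0*X 1^2*b1 from rfl]; rw [show PG2 (1,0,2) = X 0^1*X 1^0*b2 from rfl]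
    linear_combination (-X 0^0*X 1^4 - X 0^1*X 1^3) * two_zero
  rw [e]
  rw [map_add, map_add]
  exact Submodule.add_mem _ (Submodule.add_mem _ (hvW (0,1,2)) (hvW (0,2,1))) (hvW (1,0,2))

lemma sp23 : (Ideal.Quotient.mkₐ (ZMod 2) IdlG2).toLinearMap (X 0^2*X 1^3 : SG2) ∈ WG2 := by
  have e : (X 0^2*X 1^3 : SG2) = (PG2 (0,2,2) + PG2 (1,1,2)) + (X 0^0*X 1^0*(b1*b2)) := by
    rw [show PG2 (0,2,2) = X 0^0*X 1^2*b2 from rfl]; rw [show PG2 (1,1,2) = X 0^1*X 1^1*b2 from rfl]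
    linear_combination (-X 0^0*X 1^5 - X 0^1*X 1^4) * two_zero
  rw [e]
  rw [map_add]
  refine Submodule.add_mem _ ?_ ?_
  · rw [map_add]
    exact Submodule.add_mem _ (hvW (0,2,2)) (hvW (1,1,2))
  · have hmem : (X 0^0*X 1^0*(b1*b2) : SG2) ∈ IdlG2 := Ideal.mul_mem_left _ (X 0^0*X 1^0) (Ideal.subset_span (Set.mem_insert_of_mem _ (Set.mem_insert_of_mem _ rfl)))
    have hz : (Ideal.Quotient.mkₐ (ZMod 2) IdlG2).toLinearMap (X 0^0*X 1^0*(b1*b2) : SG2) = 0 := Ideal.Quotient.eq_zero_iff_mem.2 hmem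
    rw [hz]
    exact Submodule.zero_mem _

lemma sp24 : (Ideal.Quotient.mkₐ (ZMod 2) IdlG2).toLinearMap (X 0^2*X 1^4 : SG2) ∈ WG2 := by
  have e : (X 0^2*X 1^4 : SG2) = (PG2 (1,2,2)) + (X 0^0*X 1^1*(b1*b2) + X 0^0*X 1^0*(b2^2)) := by
    rw [show PG2 (1,2,2) = X 0^1*X 1^2*b2 from rfl]
    linear_combination (-X 0^0*X 1^6 - X 0^1*X 1^5) * two_zero
  rw [e]
  rw [map_add]
  refine Submodule.add_mem _ ?_ ?_
  · exact hvW (1,2,2)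
  · have hmem : (X 0^0*X 1^1*(b1*b2) + X 0^0*X 1^0*(b2^2) : SG2) ∈ IdlG2 := Ideal.add_mem _ (Ideal.mul_mem_left _ (X 0^0*X 1^1) (Ideal.subset_span (Set.mem_insert_of_mem _ (Set.mem_insert_of_mem _ rfl)))) (Ideal.mul_mem_left _ (X 0^0*X 1^0) (Ideal.subset_span (Set.mem_insert_of_mem _ (Set.mem_insert _ _))))
    have hz : (Ideal.Quotient.mkₐ (ZMod 2) IdlG2).toLinearMap (X 0^0*X 1^1*(b1*b2) + X 0^0*X 1^0*(b2^2) : SG2) = 0 := Ideal.Quotient.eq_zero_iff_mem.2 hmem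
    rw [hz]
    exact Submodule.zero_mem _

lemma sp30 : (Ideal.Quotient.mkₐ (ZMod 2) IdlG2).toLinearMap (X 0^3*X 1^0 : SG2) ∈ WG2 := by
  have e : (X 0^3*X 1^0 : SG2) = PG2 (0,0,2) + PG2 (0,1,1) + PG2 (1,0,1) := by
    rw [show PG2 (0,0,2) = X 0^0*X 1^0*b2 from rfl]; rw [show PG2 (0,1,1) = X 0^0*X 1^1*b1 from rfl]; rw [show PG2 (1,0,1) = X 0^1*X 1^0*b1 from rfl]
    linear_combination (-X 0^0*X 1^3 - X 0^1*X 1^2 - X 0^2*X 1^1) * two_zero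
  rw [e]
  rw [map_add, map_add]
  exact Submodule.add_mem _ (Submodule.add_mem _ (hvW (0,0,2)) (hvW (0,1,1))) (hvW (1,0,1))

lemma sp31 : (Ideal.Quotient.mkₐ (ZMod 2) IdlG2).toLinearMap (X 0^3*X 1^1 : SG2) ∈ WG2 := by
  have e : (X 0^3*X 1^1 : SG2) = PG2 (0,1,2) + PG2 (0,2,1) + PG2 (1,1,1) := by
    rw [show PG2 (0,1,2) = X 0^0*X 1^1*b2 from rfl]; rw [show PG2 (0,2,1) = X 0^0*X 1^2*b1 from rfl]; rw [show PG2 (1,1,1) = X 0^1*X 1^1*b1 from rfl]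
    linear_combination (-X 0^0*X 1^4 - X 0^1*X 1^3 - X 0^2*X 1^2) * two_zero
  rw [e]
  rw [map_add, map_add]
  exact Submodule.add_mem _ (Submodule.add_mem _ (hvW (0,1,2)) (hvW (0,2,1))) (hvW (1,1,1))

lemma sp32 : (Ideal.Quotient.mkₐ (ZMod 2) IdlG2).toLinearMap (X 0^3*X 1^2 : SG2) ∈ WG2 := by
  have e : (X 0^3*X 1^2 : SG2) = (PG2 (0,2,2) + PG2 (1,2,1)) + (X 0^0*X 1^0*(b1*b2)) := by
    rw [show PG2 (0,2,2) = X 0^0*X 1^2*b2 from rfl]; rw [show PG2 (1,2,1) = X 0^1*X 1^2*b1 from rfl]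
    linear_combination (-X 0^0*X 1^5 - X 0^1*X 1^4 - X 0^2*X 1^3) * two_zero
  rw [e]
  rw [map_add]
  refine Submodule.add_mem _ ?_ ?_
  · rw [map_add]
    exact Submodule.add_mem _ (hvW (0,2,2)) (hvW (1,2,1))
  · have hmem : (X 0^0*X 1^0*(b1*b2) : SG2) ∈ IdlG2 := Ideal.mul_mem_left _ (X 0^0*X 1^0) (Ideal.subset_span (Set.mem_insert_of_mem _ (Set.mem_insert_of_mem _ rfl)))
    have hz : (Ideal.Quotient.mkₐ (ZMod 2) IdlG2).toLinearMap (X 0^0*X 1^0*(b1*b2) : SG2) = 0 := Ideal.Quotient.eq_zero_iff_mem.2 hmem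
    rw [hz]
    exact Submodule.zero_mem _

lemma sp33 : (Ideal.Quotient.mkₐ (ZMod 2) IdlG2).toLinearMap (X 0^3*X 1^3 : SG2) ∈ WG2 := by
  have e : (X 0^3*X 1^3 : SG2) = (X 0^1*X 1^0*(b1*b2) + X 0^0*X 1^1*(b1*b2) + X 0^0*X 1^0*(b2^2)) := by
    linear_combination (-X 0^0*X 1^6 - X 0^1*X 1^5 - X 0^2*X 1^4) * two_zero
  rw [e]
  have hmem : (X 0^1*X 1^0*(b1*b2) + X 0^0*X 1^1*(b1*b2) + X 0^0*X 1^0*(b2^2) : SG2) ∈ IdlG2 := Ideal.add_mem _ (Ideal.add_mem _ (Ideal.mul_mem_left _ (X 0^1*X 1^0) (Ideal.subset_span (Set.mem_insert_of_mem _ (Set.mem_insert_of_mem _ rfl)))) (Ideal.mul_mem_left _ (X 0^0*X 1^1) (Ideal.subset_span (Set.mem_insert_of_mem _ (Set.mem_insert_of_mem _ rfl))))) (Ideal.mul_mem_left _ (X 0^0*X 1^0) (Ideal.subset_span (Set.mem_insert_of_mem _ (Set.mem_insert _ _))))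
  have hz : (Ideal.Quotient.mkₐ (ZMod 2) IdlG2).toLinearMap (X 0^1*X 1^0*(b1*b2) + X 0^0*X 1^1*(b1*b2) + X 0^0*X 1^0*(b2^2) : SG2) = 0 := Ideal.Quotient.eq_zero_iff_mem.2 hmem
  rw [hz]
  exact Submodule.zero_mem _

lemma sp40 : (Ideal.Quotient.mkₐ (ZMod 2) IdlG2).toLinearMap (X 0^4*X 1^0 : SG2) ∈ WG2 := by
  have e : (X 0^4*X 1^0 : SG2) = (PG2 (0,2,1) + PG2 (1,0,2)) + (X 0^0*X 1^0*(b1^2)) := by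
    rw [show PG2 (0,2,1) = X 0^0*X 1^2*b1 from rfl]; rw [show PG2 (1,0,2) = X 0^1*X 1^0*b2 from rfl]
    linear_combination (-X 0^0*X 1^4 + (-2)*X 0^1*X 1^3 + (-2)*X 0^2*X 1^2 - X 0^3*X 1^1) * two_zero
  rw [e]
  rw [map_add]
  refine Submodule.add_mem _ ?_ ?_
  · rw [map_add]
    exact Submodule.add_mem _ (hvW (0,2,1)) (hvW (1,0,2))
  · have hmem : (X 0^0*X 1^0*(b1^2) : SG2) ∈ IdlG2 := Ideal.mul_mem_left _ (X 0^0*X 1^0) (Ideal.subset_span (Set.mem_insert _ _))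
    have hz : (Ideal.Quotient.mkₐ (ZMod 2) IdlG2).toLinearMap (X 0^0*X 1^0*(b1^2) : SG2) = 0 := Ideal.Quotient.eq_zero_iff_mem.2 hmem
    rw [hz]
    exact Submodule.zero_mem _

lemma sp41 : (Ideal.Quotient.mkₐ (ZMod 2) IdlG2).toLinearMap (X 0^4*X 1^1 : SG2) ∈ WG2 := by
  have e : (X 0^4*X 1^1 : SG2) = (PG2 (1,1,2)) + (X 0^0*X 1^1*(b1^2) + X 0^0*X 1^0*(b1*b2)) := by
    rw [show PG2 (1,1,2) = X 0^1*X 1^1*b2 from rfl]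
    linear_combination (-X 0^0*X 1^5 + (-2)*X 0^1*X 1^4 + (-2)*X 0^2*X 1^3 - X 0^3*X 1^2) * two_zero
  rw [e]
  rw [map_add]
  refine Submodule.add_mem _ ?_ ?_
  · exact hvW (1,1,2)
  · have hmem : (X 0^0*X 1^1*(b1^2) + X 0^0*X 1^0*(b1*b2) : SG2) ∈ IdlG2 := Ideal.add_mem _ (Ideal.mul_mem_left _ (X 0^0*X 1^1) (Ideal.subset_span (Set.mem_insert _ _))) (Ideal.mul_mem_left _ (X 0^0*X 1^0) (Ideal.subset_span (Set.mem_insert_of_mem _ (Set.mem_insert_of_mem _ rfl))))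
    have hz : (Ideal.Quotient.mkₐ (ZMod 2) IdlG2).toLinearMap (X 0^0*X 1^1*(b1^2) + X 0^0*X 1^0*(b1*b2) : SG2) = 0 := Ideal.Quotient.eq_zero_iff_mem.2 hmem
    rw [hz]
    exact Submodule.zero_mem _

lemma sp42 : (Ideal.Quotient.mkₐ (ZMod 2) IdlG2).toLinearMap (X 0^4*X 1^2 : SG2) ∈ WG2 := by
  have e : (X 0^4*X 1^2 : SG2) = (PG2 (1,2,2)) + (X 0^0*X 1^2*(b1^2) + X 0^0*X 1^1*(b1*b2)) := by
    rw [show PG2 (1,2,2) = X 0^1*X 1^2*b2 from rfl]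
    linear_combination (-X 0^0*X 1^6 + (-2)*X 0^1*X 1^5 + (-2)*X 0^2*X 1^4 - X 0^3*X 1^3) * two_zero
  rw [e]
  rw [map_add]
  refine Submodule.add_mem _ ?_ ?_
  · exact hvW (1,2,2)
  · have hmem : (X 0^0*X 1^2*(b1^2) + X 0^0*X 1^1*(b1*b2) : SG2) ∈ IdlG2 := Ideal.add_mem _ (Ideal.mul_mem_left _ (X 0^0*X 1^2) (Ideal.subset_span (Set.mem_insert _ _))) (Ideal.mul_mem_left _ (X 0^0*X 1^1) (Ideal.subset_span (Set.mem_insert_of_mem _ (Set.mem_insert_of_mem _ rfl))))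
    have hz : (Ideal.Quotient.mkₐ (ZMod 2) IdlG2).toLinearMap (X 0^0*X 1^2*(b1^2) + X 0^0*X 1^1*(b1*b2) : SG2) = 0 := Ideal.Quotient.eq_zero_iff_mem.2 hmem
    rw [hz]
    exact Submodule.zero_mem _

lemma sp50 : (Ideal.Quotient.mkₐ (ZMod 2) IdlG2).toLinearMap (X 0^5*X 1^0 : SG2) ∈ WG2 := by
  have e : (X 0^5*X 1^0 : SG2) = (PG2 (0,2,2) + PG2 (1,1,2) + PG2 (1,2,1)) + (X 0^1*X 1^0*(b1^2) + X 0^0*X 1^0*(b1*b2)) := by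
    rw [show PG2 (0,2,2) = X 0^0*X 1^2*b2 from rfl]; rw [show PG2 (1,1,2) = X 0^1*X 1^1*b2 from rfl]; rw [show PG2 (1,2,1) = X 0^1*X 1^2*b1 from rfl]
    linear_combination (-X 0^0*X 1^5 + (-2)*X 0^1*X 1^4 + (-2)*X 0^2*X 1^3 + (-2)*X 0^3*X 1^2 - X 0^4*X 1^1) * two_zero
  rw [e]
  rw [map_add]
  refine Submodule.add_mem _ ?_ ?_
  · rw [map_add, map_add]
    exact Submodule.add_mem _ (Submodule.add_mem _ (hvW (0,2,2)) (hvW (1,1,2))) (hvW (1,2,1))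
  · have hmem : (X 0^1*X 1^0*(b1^2) + X 0^0*X 1^0*(b1*b2) : SG2) ∈ IdlG2 := Ideal.add_mem _ (Ideal.mul_mem_left _ (X 0^1*X 1^0) (Ideal.subset_span (Set.mem_insert _ _))) (Ideal.mul_mem_left _ (X 0^0*X 1^0) (Ideal.subset_span (Set.mem_insert_of_mem _ (Set.mem_insert_of_mem _ rfl))))
    have hz : (Ideal.Quotient.mkₐ (ZMod 2) IdlG2).toLinearMap (X 0^1*X 1^0*(b1^2) + X 0^0*X 1^0*(b1*b2) : SG2) = 0 := Ideal.Quotient.eq_zero_iff_mem.2 hmem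
    rw [hz]
    exact Submodule.zero_mem _

lemma sp51 : (Ideal.Quotient.mkₐ (ZMod 2) IdlG2).toLinearMap (X 0^5*X 1^1 : SG2) ∈ WG2 := by
  have e : (X 0^5*X 1^1 : SG2) = (PG2 (1,2,2)) + (X 0^1*X 1^1*(b1^2) + X 0^1*X 1^0*(b1*b2) + X 0^0*X 1^1*(b1*b2) + X 0^0*X 1^0*(b2^2)) := by
    rw [show PG2 (1,2,2) = X 0^1*X 1^2*b2 from rfl]
    linear_combination (-X 0^0*X 1^6 + (-2)*X 0^1*X 1^5 + (-2)*X 0^2*X 1^4 + (-2)*X 0^3*X 1^3 - X 0^4*X 1^2) * two_zero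
  rw [e]
  rw [map_add]
  refine Submodule.add_mem _ ?_ ?_
  · exact hvW (1,2,2)
  · have hmem : (X 0^1*X 1^1*(b1^2) + X 0^1*X 1^0*(b1*b2) + X 0^0*X 1^1*(b1*b2) + X 0^0*X 1^0*(b2^2) : SG2) ∈ IdlG2 := Ideal.add_mem _ (Ideal.add_mem _ (Ideal.add_mem _ (Ideal.mul_mem_left _ (X 0^1*X 1^1) (Ideal.subset_span (Set.mem_insert _ _))) (Ideal.mul_mem_left _ (X 0^1*X 1^0) (Ideal.subset_span (Set.mem_insert_of_mem _ (Set.mem_insert_of_mem _ rfl))))) (Ideal.mul_mem_left _ (X 0^0*X 1^1) (Ideal.subset_span (Set.mem_insert_of_mem _ (Set.mem_insert_of_mem _ rfl))))) (Ideal.mul_mem_left _ (X 0^0*X 1^0) (Ideal.subset_span (Set.mem_insert_of_mem _ (Set.mem_insert _ _))))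
    have hz : (Ideal.Quotient.mkₐ (ZMod 2) IdlG2).toLinearMap (X 0^1*X 1^1*(b1^2) + X 0^1*X 1^0*(b1*b2) + X 0^0*X 1^1*(b1*b2) + X 0^0*X 1^0*(b2^2) : SG2) = 0 := Ideal.Quotient.eq_zero_iff_mem.2 hmem
    rw [hz]
    exact Submodule.zero_mem _

lemma sp60 : (Ideal.Quotient.mkₐ (ZMod 2) IdlG2).toLinearMap (X 0^6*X 1^0 : SG2) ∈ WG2 := by
  have e : (X 0^6*X 1^0 : SG2) = (X 0^2*X 1^0*(b1^2) + X 0^0*X 1^2*(b1^2) + X 0^0*X 1^0*(b2^2)) := by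
    linear_combination (-X 0^0*X 1^6 - X 0^1*X 1^5 + (-2)*X 0^2*X 1^4 + (-2)*X 0^3*X 1^3 + (-2)*X 0^4*X 1^2 - X 0^5*X 1^1) * two_zero
  rw [e]
  have hmem : (X 0^2*X 1^0*(b1^2) + X 0^0*X 1^2*(b1^2) + X 0^0*X 1^0*(b2^2) : SG2) ∈ IdlG2 := Ideal.add_mem _ (Ideal.add_mem _ (Ideal.mul_mem_left _ (X 0^2*X 1^0) (Ideal.subset_span (Set.mem_insert _ _))) (Ideal.mul_mem_left _ (X 0^0*X 1^2) (Ideal.subset_span (Set.mem_insert _ _)))) (Ideal.mul_mem_left _ (X 0^0*X 1^0) (Ideal.subset_span (Set.mem_insert_of_mem _ (Set.mem_insert _ _))))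
  have hz : (Ideal.Quotient.mkₐ (ZMod 2) IdlG2).toLinearMap (X 0^2*X 1^0*(b1^2) + X 0^0*X 1^2*(b1^2) + X 0^0*X 1^0*(b2^2) : SG2) = 0 := Ideal.Quotient.eq_zero_iff_mem.2 hmem
  rw [hz]
  exact Submodule.zero_mem _

set_option maxHeartbeats 1600000 in
lemma mk_mon_mem (a b : ℕ) : (Ideal.Quotient.mkₐ (ZMod 2) IdlG2).toLinearMap (X 0^a*X 1^b : SG2) ∈ WG2 := by
  by_cases h : a + b ≤ 6
  · have ha : a ≤ 6 := by omega
    have hb : b ≤ 6 := by omega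
    interval_cases a <;> interval_cases b <;>
      first
      | with_reducible exact sp00
      | with_reducible exact sp01
      | with_reducible exact sp02
      | with_reducible exact sp03
      | with_reducible exact sp04
      | with_reducible exact sp05
      | with_reducible exact sp06
      | with_reducible exact sp10
      | with_reducible exact sp11
      | with_reducible exact sp12
      | with_reducible exact sp13
      | with_reducible exact sp14
      | with_reducible exact sp15
      | with_reducible exact sp20
      | with_reducible exact sp21
      | with_reducible exact sp22
      | with_reducible exact sp23
      | with_reducible exact sp24
      | with_reducible exact sp30
      | with_reducible exact sp31
      | with_reducible exact sp32
      | with_reducible exact sp33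
      | with_reducible exact sp40
      | with_reducible exact sp41
      | with_reducible exact sp42
      | with_reducible exact sp50
      | with_reducible exact sp51
      | with_reducible exact sp60
      | omega
  · have hmem := hi_mem a b (by omega)
    have hz : (Ideal.Quotient.mkₐ (ZMod 2) IdlG2).toLinearMap (X 0^a*X 1^b : SG2) = 0 := Ideal.Quotient.eq_zero_iff_mem.2 hmem
    rw [hz]
    exact Submodule.zero_mem _

lemma span_top : ⊤ ≤ WG2 := by
  intro x hx
  obtain ⟨f, rfl⟩ := Ideal.Quotient.mk_surjective (I := IdlG2) x
  clear hx
  show (Ideal.Quotient.mkₐ (ZMod 2) IdlG2).toLinearMap f ∈ WG2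
  have hf : f ∈ Submodule.span (ZMod 2) (Set.range (basisMonomials (Fin 2) (ZMod 2))) := by
    rw [Module.Basis.span_eq]; trivial
  induction hf using Submodule.span_induction with
  | mem g hg =>
    obtain ⟨ν, rfl⟩ := hg
    have hgm : (basisMonomials (Fin 2) (ZMod 2)) ν = X 0 ^ (ν 0) * X 1 ^ (ν 1) := by
      rw [coe_basisMonomials]; exact mon_eq ν
    rw [hgm]
    exact mk_mon_mem (ν 0) (ν 1)
  | zero => rw [map_zero]; exact Submodule.zero_mem WG2
  | add g h _ _ hg hh => rw [map_add]; exact Submodule.add_mem _ hg hh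
  | smul r g _ hg => rw [map_smul]; exact Submodule.smul_mem _ r hg

lemma indepG2 : LinearIndependent (ZMod 2) vG2 := by
  rw [Fintype.linearIndependent_iff]
  intro d hd q
  have h1 : (∑ r, d r • PG2 r) ∈ IdlG2 := by
    rw [← Ideal.Quotient.eq_zero_iff_mem]
    have hmk : Ideal.Quotient.mk IdlG2 (∑ r, d r • PG2 r) = ∑ r, d r • vG2 r := by
      show (Ideal.Quotient.mkₐ (ZMod 2) IdlG2).toLinearMap (∑ r, d r • PG2 r) = _
      rw [map_sum]
      exact Finset.sum_congr rfl (fun r _ => by rw [map_smul]; rfl)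
    rw [hmk, hd]
  have h2 := lam_ideal q _ h1
  rw [map_sum] at h2
  have h3 : ∀ r ∈ Finset.univ, lam q (d r • PG2 r) = if q = r then d r else 0 := by
    intro r _
    rw [map_smul, lam_P q r, smul_eq_mul, mul_ite, mul_one, mul_zero]
  rw [Finset.sum_congr rfl h3, Finset.sum_ite_eq] at h2
  simpa using h2
/-- `S/(b₁², b₂², b₁b₂)` is a free `ℤ/2`-module of dimension 18, with basis the
images of `t₁^a t₂^b · e` for `0 ≤ a ≤ 1`, `0 ≤ b ≤ 2`, `e ∈ {1, b₁, b₂}`. -/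
theorem chow_ring_nonsplit_G2_flag :
    (∃ B : Module.Basis (Fin 2 × Fin 3 × Fin 3) (ZMod 2) ChowG2,
      ∀ p : Fin 2 × Fin 3 × Fin 3,
        B p = Ideal.Quotient.mk _
          (X 0 ^ (p.1 : ℕ) * X 1 ^ (p.2.1 : ℕ) * ![1, b1, b2] p.2.2)) ∧
    Module.finrank (ZMod 2) ChowG2 = 18 := by
  constructor
  · exact ⟨Module.Basis.mk indepG2 span_top, fun p => by erw [Module.Basis.mk_apply]; rfl⟩
  · exact (Module.finrank_eq_card_basis (Module.Basis.mk indepG2 span_top)).trans (by simp)
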